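/- The probabilistic lifting of a relation is linear with respect to sub-convex combinations: if R is a relation on a countable set S, (μ_i) and (ν_i) are countable families of sub-distributions with μ_i R̂ ν_i for all i, and (p_i) are nonnegative weights with Σ_i p_i ≤ 1, then Σ_i p_i·μ_i R̂ Σ_i p_i·ν_i (assuming both sums are sub-distributions). -/
import Mathlib


open scoped ENNReal

/-- A discrete sub-probability distribution: total mass at most 1. -/
def SubDist {S : Type*} (μ : S → ℝ≥0∞) : Prop := ∑' x, μ x ≤ 1

/-- Probabilistic lifting of a relation via a matching (coupling). -/
def Lift {S : Type*} (R : S → S → Prop) (μ ν : S → ℝ≥0∞) : Prop :=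
  ∃ m : S → S → ℝ≥0∞,
    (∀ x y, m x y ≠ 0 → R x y) ∧
    (∀ x, (∑' y, m x y) = μ x) ∧
    (∀ y, (∑' x, m x y) ≤ ν y)

/-- Probabilistic lifting is linear with respect to countable sub-convex
combinations. -/
theorem stmt9 {S ι : Type*} [Countable S] [Countable ι] (R : S → S → Prop)
    (μ ν : ι → S → ℝ≥0∞) (p : ι → ℝ≥0∞)
    (hp : ∑' i, p i ≤ 1)
    (hμ : ∀ i, SubDist (μ i)) (hν : ∀ i, SubDist (ν i))
    (hμc : SubDist (fun x => ∑' i, p i * μ i x))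
    (hνc : SubDist (fun x => ∑' i, p i * ν i x))
    (h : ∀ i, Lift R (μ i) (ν i)) :
    Lift R (fun x => ∑' i, p i * μ i x) (fun x => ∑' i, p i * ν i x) := by
  choose m hR hμm hνm using h
  refine ⟨fun x y => ∑' i, p i * m i x y, ?_, ?_, ?_⟩
  · intro x y hne
    obtain ⟨i, hi⟩ : ∃ i, p i * m i x y ≠ 0 := by
      by_contra hc
      push_neg at hc
      exact hne (by simp [hc])
    exact hR i x y (fun h0 => hi (by simp [h0]))
  · intro x
    rw [ENNReal.tsum_comm]
    exact tsum_congr fun i => by rw [ENNReal.tsum_mul_left, hμm i x]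
  · intro y
    rw [ENNReal.tsum_comm]
    exact ENNReal.tsum_le_tsum fun i => by
      rw [ENNReal.tsum_mul_left]
      exact mul_le_mul_right (hνm i y) _
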